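/- arXiv:1405.5143 — 4 statements merged into one kernel-verified Lean document; each statement's English description precedes it below -/
import Mathlib

section
/- Let k, n be natural numbers and J : Matrix (Fin k) (Fin (n+1)) ℂ. Define J' : Matrix (Fin (k+1)) (Fin (n+2)) ℂ whose first row is Fin.snoc (fun _ => (−1 : ℂ)) 1 (the vector (−1,…,−1,1)) and whose remaining rows are Fin.snoc (J i) 0 (the rows of J each extended by a final 0). Then for every w : Fin (n+1) → ℂ and c : ℂ, the vector Fin.snoc w c lies in the ℂ-linear span of the rows of J' if and only if the vector (fun i => w i + c) lies in the ℂ-linear span of the rows of J. -/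
open scoped BigOperators

theorem snoc_mem_rowSpan_extended_iff
    (k n : ℕ) (J : Matrix (Fin k) (Fin (n+1)) ℂ)
    (J' : Matrix (Fin (k+1)) (Fin (n+2)) ℂ)
    (hJ'0 : J' 0 = Fin.snoc (fun _ => (-1 : ℂ)) 1)
    (hJ' : ∀ i : Fin k, J' i.succ = Fin.snoc (J i) 0)
    (w : Fin (n+1) → ℂ) (c : ℂ) :
    Fin.snoc w c ∈ Submodule.span ℂ (Set.range fun i => J' i) ↔
      (fun i => w i + c) ∈ Submodule.span ℂ (Set.range fun i => J i) := by
  rw [Submodule.mem_span_range_iff_exists_fun, Submodule.mem_span_range_iff_exists_fun]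
  constructor
  · rintro ⟨a, ha⟩
    refine ⟨fun i => a i.succ, funext fun i => ?_⟩
    have hlast := congrFun ha (Fin.last (n+1))
    have hi := congrFun ha (Fin.castSucc i)
    simp only [Finset.sum_apply, Pi.smul_apply, Fin.sum_univ_succ, hJ'0, hJ',
      Fin.snoc_last, Fin.snoc_castSucc, smul_eq_mul, mul_one, mul_zero,
      Finset.sum_const_zero, add_zero] at hlast hi
    rw [mul_neg_one] at hi
    have : (∑ j, a j.succ * J j i) = w i + a 0 := by linear_combination hi
    simpa [hlast] using this
  · rintro ⟨b, hb⟩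
    refine ⟨Fin.cons c (fun i => b i), funext fun j => ?_⟩
    have hb' := congrFun hb
    refine Fin.lastCases ?_ (fun i => ?_) j
    · simp [Finset.sum_apply, Fin.sum_univ_succ, hJ'0, hJ', Fin.snoc_last]
    · have := hb' i
      simp only [Finset.sum_apply, Pi.smul_apply, smul_eq_mul] at this
      simp only [Finset.sum_apply, Pi.smul_apply, Fin.sum_univ_succ, hJ'0, hJ',
        Fin.snoc_castSucc, smul_eq_mul, Fin.cons_zero, Fin.cons_succ, mul_neg_one]
      linear_combination this
end

section
/- Let n, k be natural numbers, f : Fin k → MvPolynomial (Fin (n+1)) ℂ, and u : Fin (n+1) → ℂ with u₊ := ∑ i, u i. Let p : Fin (n+1) → ℂ satisfy p i ≠ 0 for all i and p₊ := ∑ i, p i ≠ 0, and set p' := Fin.snoc p p₊ : Fin (n+2) → ℂ. Let H := X (Fin.last (n+1)) − ∑ i, X (Fin.castSucc i) and F := Fin.cons H (fun j => MvPolynomial.rename Fin.castSucc (f j)) : Fin (k+1) → MvPolynomial (Fin (n+2)) ℂ. Then the vector (fun i => u i / p i − u₊ / p₊) lies in the ℂ-linear span of the rows of the Jacobian matrix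 of f evaluated at p (the matrix with (j,i) entry eval p (pderiv i (f j))) if and only if the vector Fin.snoc (fun i => u i / p i) (−u₊ / p₊) lies in the ℂ-linear span of the rows of the Jacobian matrix of F evaluated at p' (the matrix with (j,i) entry eval p' (pderiv i (F j))). -/
open MvPolynomial
open scoped BigOperators

/-- The linear map appending a zero coordinate. -/
def snocZeroLM (n : ℕ) : (Fin (n+1) → ℂ) →ₗ[ℂ] (Fin (n+2) → ℂ) where
  toFun w := Fin.snoc w 0
  map_add' a b := by
    funext i
    refine Fin.lastCases ?_ (fun j => ?_) i <;> simp
  map_smul' c a := by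
    funext i
    refine Fin.lastCases ?_ (fun j => ?_) i <;> simp

theorem critical_point_bijection_X_Xprime
    (n k : ℕ) (f : Fin k → MvPolynomial (Fin (n+1)) ℂ)
    (u : Fin (n+1) → ℂ) (p : Fin (n+1) → ℂ)
    (hp : ∀ i, p i ≠ 0) (hps : (∑ i, p i) ≠ 0)
    (p' : Fin (n+2) → ℂ) (hp' : p' = Fin.snoc p (∑ i, p i))
    (H : MvPolynomial (Fin (n+2)) ℂ)
    (hH : H = X (Fin.last (n+1)) - ∑ i : Fin (n+1), X (Fin.castSucc i))
    (F : Fin (k+1) → MvPolynomial (Fin (n+2)) ℂ)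
    (hF : F = Fin.cons H (fun j => MvPolynomial.rename Fin.castSucc (f j))) :
    ((fun i => u i / p i - (∑ i, u i) / (∑ i, p i)) ∈
        Submodule.span ℂ
          (Set.range fun j : Fin k => fun i => eval p (pderiv i (f j)))) ↔
      ((Fin.snoc (fun i => u i / p i) (-(∑ i, u i) / (∑ i, p i)) : Fin (n+2) → ℂ) ∈
        Submodule.span ℂ
          (Set.range fun j : Fin (k+1) => fun i => eval p' (pderiv i (F j)))) := by
  classical
  set L := snocZeroLM n with hL
  set v : Fin (n+1) → ℂ := fun i => u i / p i - (∑ i, u i) / (∑ i, p i) with hv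
  set v' : Fin (n+2) → ℂ :=
    Fin.snoc (fun i => u i / p i) (-(∑ i, u i) / (∑ i, p i)) with hv'
  set r₀ : Fin (n+2) → ℂ := Fin.snoc (fun _ => (-1 : ℂ)) 1 with hr₀
  set rowf : Fin k → (Fin (n+1) → ℂ) := fun j => fun i => eval p (pderiv i (f j)) with hrowf
  set rowF : Fin (k+1) → (Fin (n+2) → ℂ) := fun j => fun i => eval p' (pderiv i (F j)) with hrowF
  -- row 0 of the big Jacobian
  have hrow0 : rowF 0 = r₀ := by
    funext i
    simp only [hrowF, hF, Fin.cons_zero, hH]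
    refine Fin.lastCases ?_ (fun j => ?_) i
    · simp [hr₀, Fin.snoc_last, pderiv_X, Pi.single_apply,
        (Fin.castSucc_lt_last _).ne']
    · have : pderiv (Fin.castSucc j) (X (Fin.last (n+1)) -
          ∑ i : Fin (n+1), X (Fin.castSucc i) : MvPolynomial (Fin (n+2)) ℂ)
          = -1 := by
        rw [map_sub, map_sum]
        rw [pderiv_X_of_ne (Fin.castSucc_lt_last _).ne.symm]
        rw [Finset.sum_eq_single j]
        · simp
        · intro b _ hb
          exact pderiv_X_of_ne (by simpa using hb)
        · simp
      rw [this]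
      simp [hr₀, Fin.snoc_castSucc]
  -- other rows
  have hrowS : ∀ j : Fin k, rowF j.succ = L (rowf j) := by
    intro j
    funext i
    simp only [hrowF, hF, Fin.cons_succ, hL, snocZeroLM, LinearMap.coe_mk, AddHom.coe_mk]
    refine Fin.lastCases ?_ (fun i0 => ?_) i
    · have : pderiv (Fin.last (n+1)) (rename Fin.castSucc (f j)) = 0 := by
        apply pderiv_eq_zero_of_notMem_vars
        intro hmem
        obtain ⟨m, _, hm⟩ := mem_vars_rename _ _ hmem
        exact (Fin.castSucc_lt_last m).ne hm
      simp [this]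
    · rw [pderiv_rename (Fin.castSucc_injective _), eval_rename]
      have hcomp : p' ∘ Fin.castSucc = p := by
        funext a; simp [hp', Fin.snoc_castSucc]
      rw [hcomp]
      simp [hrowf, Fin.snoc_castSucc]
  -- key decomposition v' = L v + (- u₊/p₊) • r₀
  have hdecomp : v' = L v + (-((∑ i, u i) / (∑ i, p i))) • r₀ := by
    funext i
    refine Fin.lastCases ?_ (fun j => ?_) i
    · simp [hv', hL, snocZeroLM, hr₀, Fin.snoc_last, neg_div]
    · simp only [hv', hL, snocZeroLM, hr₀, LinearMap.coe_mk, AddHom.coe_mk, Pi.add_apply,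
        Pi.smul_apply, Fin.snoc_castSucc, smul_eq_mul, hv]
      ring
  have hrangeF : Set.range rowF = insert r₀ (Set.range fun j : Fin k => L (rowf j)) := by
    have : rowF = Fin.cons r₀ (fun j : Fin k => L (rowf j)) := by
      funext j
      refine Fin.cases ?_ (fun j0 => ?_) j
      · simpa using hrow0
      · simpa using hrowS j0
    rw [this, Fin.range_cons]
  have hr₀mem : r₀ ∈ Submodule.span ℂ (Set.range rowF) := by
    rw [hrangeF]; exact Submodule.subset_span (Set.mem_insert _ _)
  have hrangeL : (Set.range fun j : Fin k => L (rowf j)) = L '' Set.range rowf := by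
    rw [← Set.range_comp]; rfl
  constructor
  · intro hvmem
    have hLv : L v ∈ Submodule.span ℂ (Set.range rowF) := by
      rw [hrangeF]
      refine Submodule.span_mono (Set.subset_insert _ _) ?_
      rw [hrangeL, ← Submodule.map_span]
      exact Submodule.mem_map_of_mem hvmem
    rw [hdecomp]
    exact Submodule.add_mem _ hLv (Submodule.smul_mem _ _ hr₀mem)
  · intro hv'mem
    have hLv : L v ∈ Submodule.span ℂ (Set.range rowF) := by
      have : L v = v' + ((∑ i, u i) / (∑ i, p i)) • r₀ := by
        rw [hdecomp]; module
      rw [this]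
      exact Submodule.add_mem _ hv'mem (Submodule.smul_mem _ _ hr₀mem)
    rw [hrangeF, hrangeL] at hLv
    rw [Submodule.mem_span_insert] at hLv
    obtain ⟨a, z, hz, hzeq⟩ := hLv
    rw [← Submodule.map_span] at hz
    obtain ⟨z₀, hz₀, rfl⟩ := hz
    -- compare last coordinates
    have hlast : (L v) (Fin.last (n+1)) = a * r₀ (Fin.last (n+1)) +
        (L z₀) (Fin.last (n+1)) := by rw [hzeq]; simp
    have hL0 : ∀ w : Fin (n+1) → ℂ, (L w) (Fin.last (n+1)) = 0 := by
      intro w; simp [hL, snocZeroLM, Fin.snoc_last]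
    have ha : a = 0 := by
      have := hlast
      rw [hL0, hL0] at this
      simpa [hr₀, Fin.snoc_last] using this.symm
    have hveq : L v = L z₀ := by rw [hzeq, ha]; simp
    have hinj : Function.Injective L := by
      intro a b hab
      funext i
      have := congrFun hab (Fin.castSucc i)
      simpa [hL, snocZeroLM, Fin.snoc_castSucc] using this
    rw [hinj hveq]
    exact hz₀
end

section
/- Let u₀, u₁, u₂ be positive real numbers and set u₊ := u₀ + u₁ + u₂. Define p₀ := (2u₀+u₁)² / (4u₊²), p₁ := (2u₀+u₁)(u₁+2u₂) / (2u₊²), p₂ := (u₁+2u₂)² / (4u₊²). Then: (a) p₀ + p₁ + p₂ = 1; (b) 4p₀p₂ = p₁²; (c) p₀, p₁, p₂ are all positive; and (d) there exists μ : ℝ such that u₀/p₀ − u₊ = μ·(4p₂), u₁/p₁ − u₊ = μ·(−2p₁), and u₂/p₂ − u₊ = μ·(4p₀). -/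
theorem conic_mle_critical_point
    (u₀ u₁ u₂ : ℝ) (h₀ : 0 < u₀) (h₁ : 0 < u₁) (h₂ : 0 < u₂) :
    (2*u₀+u₁)^2 / (4*(u₀+u₁+u₂)^2) +
        (2*u₀+u₁)*(u₁+2*u₂) / (2*(u₀+u₁+u₂)^2) +
        (u₁+2*u₂)^2 / (4*(u₀+u₁+u₂)^2) = 1 ∧
    4 * ((2*u₀+u₁)^2 / (4*(u₀+u₁+u₂)^2)) * ((u₁+2*u₂)^2 / (4*(u₀+u₁+u₂)^2)) =
      ((2*u₀+u₁)*(u₁+2*u₂) / (2*(u₀+u₁+u₂)^2))^2 ∧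
    (0 < (2*u₀+u₁)^2 / (4*(u₀+u₁+u₂)^2) ∧
      0 < (2*u₀+u₁)*(u₁+2*u₂) / (2*(u₀+u₁+u₂)^2) ∧
      0 < (u₁+2*u₂)^2 / (4*(u₀+u₁+u₂)^2)) ∧
    ∃ μ : ℝ,
      u₀ / ((2*u₀+u₁)^2 / (4*(u₀+u₁+u₂)^2)) - (u₀+u₁+u₂) =
          μ * (4 * ((u₁+2*u₂)^2 / (4*(u₀+u₁+u₂)^2))) ∧
      u₁ / ((2*u₀+u₁)*(u₁+2*u₂) / (2*(u₀+u₁+u₂)^2)) - (u₀+u₁+u₂) =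
          μ * (-(2 * ((2*u₀+u₁)*(u₁+2*u₂) / (2*(u₀+u₁+u₂)^2)))) ∧
      u₂ / ((u₁+2*u₂)^2 / (4*(u₀+u₁+u₂)^2)) - (u₀+u₁+u₂) =
          μ * (4 * ((2*u₀+u₁)^2 / (4*(u₀+u₁+u₂)^2))) := by
  have ha : (0:ℝ) < 2*u₀+u₁ := by linarith
  have hb : (0:ℝ) < u₁+2*u₂ := by linarith
  have hs : (0:ℝ) < u₀+u₁+u₂ := by linarith
  have ha' := ha.ne'
  have hb' := hb.ne'
  have hs' := hs.ne'
  refine ⟨by field_simp; ring, by field_simp; ring,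
    ⟨by positivity, by positivity, by positivity⟩,
    ⟨(u₀+u₁+u₂)^3*(4*u₀*u₂-u₁^2)/((2*u₀+u₁)^2*(u₁+2*u₂)^2), ?_, ?_, ?_⟩⟩ <;>
  · field_simp
    ring
end

section
/- Let u₀, u₁, u₂ : ℂ with u₊ := u₀ + u₁ + u₂ ≠ 0. Suppose p₀, p₁, p₂, μ : ℂ satisfy: p₀ ≠ 0, p₁ ≠ 0, p₂ ≠ 0; p₀ + p₁ + p₂ = 1; 4p₀p₂ = p₁²; u₀/p₀ − u₊ = μ·(4p₂); u₁/p₁ − u₊ = μ·(−2p₁); and u₂/p₂ − u₊ = μ·(4p₀). Then p₀ = (2u₀+u₁)² / (4u₊²), p₁ = (2u₀+u₁)(u₁+2u₂) / (2u₊²), and p₂ = (u₁+2u₂)² / (4u₊²). -/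
theorem conic_mle_uniqueness
    (u₀ u₁ u₂ : ℂ) (hu : u₀ + u₁ + u₂ ≠ 0)
    (p₀ p₁ p₂ μ : ℂ)
    (hp₀ : p₀ ≠ 0) (hp₁ : p₁ ≠ 0) (hp₂ : p₂ ≠ 0)
    (hsum : p₀ + p₁ + p₂ = 1)
    (hconic : 4 * p₀ * p₂ = p₁ ^ 2)
    (hc₀ : u₀ / p₀ - (u₀ + u₁ + u₂) = μ * (4 * p₂))
    (hc₁ : u₁ / p₁ - (u₀ + u₁ + u₂) = μ * (-(2 * p₁)))
    (hc₂ : u₂ / p₂ - (u₀ + u₁ + u₂) = μ * (4 * p₀)) :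
    p₀ = (2*u₀+u₁)^2 / (4*(u₀+u₁+u₂)^2) ∧
    p₁ = (2*u₀+u₁)*(u₁+2*u₂) / (2*(u₀+u₁+u₂)^2) ∧
    p₂ = (u₁+2*u₂)^2 / (4*(u₀+u₁+u₂)^2) := by
  have e0 : u₀ = p₀ * (u₀ + u₁ + u₂) + 4 * μ * p₀ * p₂ := by
    field_simp at hc₀; linear_combination hc₀
  have e1 : u₁ = p₁ * (u₀ + u₁ + u₂) - 2 * μ * p₁ ^ 2 := by
    field_simp at hc₁; linear_combination hc₁
  have e2 : u₂ = p₂ * (u₀ + u₁ + u₂) + 4 * μ * p₀ * p₂ := by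
    field_simp at hc₂; linear_combination hc₂
  have k0 : 2 * u₀ + u₁ = (2 * p₀ + p₁) * (u₀ + u₁ + u₂) := by
    linear_combination 2 * e0 + e1 + 2 * μ * hconic
  have k2 : u₁ + 2 * u₂ = (p₁ + 2 * p₂) * (u₀ + u₁ + u₂) := by
    linear_combination e1 + 2 * e2 + 2 * μ * hconic
  have hu2 : (u₀+u₁+u₂)^2 ≠ 0 := pow_ne_zero _ hu
  have h2 : (4:ℂ) * (u₀+u₁+u₂)^2 ≠ 0 := mul_ne_zero (by norm_num) hu2
  have h2' : (2:ℂ) * (u₀+u₁+u₂)^2 ≠ 0 := mul_ne_zero two_ne_zero hu2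
  refine ⟨?_, ?_, ?_⟩
  · rw [eq_div_iff h2]
    linear_combination -((2*u₀+u₁+(2*p₀+p₁)*(u₀+u₁+u₂)) * k0)
      + (u₀+u₁+u₂)^2 * hconic - 4*p₀*(u₀+u₁+u₂)^2 * hsum
  · rw [eq_div_iff h2']
    linear_combination -((u₁+2*u₂) * k0) - (2*p₀+p₁)*(u₀+u₁+u₂) * k2
      - (u₀+u₁+u₂)^2 * hconic - 2*p₁*(u₀+u₁+u₂)^2 * hsum
  · rw [eq_div_iff h2]
    linear_combination -((u₁+2*u₂+(p₁+2*p₂)*(u₀+u₁+u₂)) * k2)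
      + (u₀+u₁+u₂)^2 * hconic - 4*p₂*(u₀+u₁+u₂)^2 * hsum
end
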